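/- Fix a constant C > 0 and define f(g) = log₂(C · (g + 1) e^{−g} / (1 − e^{−g})) · (1 − e^{−g}) for g > 0. Then at every g > 0 satisfying C · (g + 1) e^{−g} / (1 − e^{−g}) ≥ 1, the second derivative of f is strictly negative; in particular, f is strictly concave on any interval contained in the set where C · (g + 1) e^{−g} / (1 − e^{−g}) ≥ 1. -/

import Mathlib

open Real


noncomputable def auxG (C : ℝ) : ℝ → ℝ := fun g =>
  (Real.log C + Real.log (g + 1) - g - Real.log (1 - Real.exp (-g))) * (1 - Real.exp (-g))
    / Real.log 2

noncomputable def auxG1 (C : ℝ) : ℝ → ℝ := fun g =>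
  ((1 / (g + 1) - 1 - Real.exp (-g) / (1 - Real.exp (-g))) * (1 - Real.exp (-g))
    + (Real.log C + Real.log (g + 1) - g - Real.log (1 - Real.exp (-g))) * Real.exp (-g))
    / Real.log 2

noncomputable def auxG2 (C : ℝ) : ℝ → ℝ := fun g =>
  ((-(1 / (g + 1) ^ 2) + Real.exp (-g) / (1 - Real.exp (-g)) ^ 2) * (1 - Real.exp (-g))
    + 2 * (1 / (g + 1) - 1 - Real.exp (-g) / (1 - Real.exp (-g))) * Real.exp (-g)
    - (Real.log C + Real.log (g + 1) - g - Real.log (1 - Real.exp (-g))) * Real.exp (-g))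
    / Real.log 2

lemma expneg_lt_one {g : ℝ} (hg : 0 < g) : Real.exp (-g) < 1 := by
  have := Real.exp_lt_exp.mpr (show -g < 0 by linarith)
  simpa using this

lemma u_pos {g : ℝ} (hg : 0 < g) : 0 < 1 - Real.exp (-g) := by
  linarith [expneg_lt_one hg]

lemma hasDerivAt_E (g : ℝ) : HasDerivAt (fun x : ℝ => Real.exp (-x)) (-Real.exp (-g)) g := by
  exact ((Real.hasDerivAt_exp (-g)).comp g (hasDerivAt_neg g)).congr_deriv (by ring)

lemma hasDerivAt_u (g : ℝ) :
    HasDerivAt (fun x : ℝ => 1 - Real.exp (-x)) (Real.exp (-g)) g := by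
  exact ((hasDerivAt_const g (1:ℝ)).sub (hasDerivAt_E g)).congr_deriv (by ring)

lemma hasDerivAt_M (C : ℝ) {g : ℝ} (hg : 0 < g) :
    HasDerivAt (fun x : ℝ => Real.log C + Real.log (x + 1) - x - Real.log (1 - Real.exp (-x)))
      (1 / (g + 1) - 1 - Real.exp (-g) / (1 - Real.exp (-g))) g := by
  have hu0 : (1 : ℝ) - Real.exp (-g) ≠ 0 := ne_of_gt (u_pos hg)
  have hlog1 : HasDerivAt (fun x : ℝ => Real.log (x + 1)) (1 / (g + 1)) g := by
    simpa using ((hasDerivAt_id g).add_const 1).log (by positivity)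
  have hlogu : HasDerivAt (fun x : ℝ => Real.log (1 - Real.exp (-x)))
      (Real.exp (-g) / (1 - Real.exp (-g))) g := (hasDerivAt_u g).log hu0
  have := (((hasDerivAt_const g (Real.log C)).add hlog1).sub (hasDerivAt_id g)).sub hlogu
  exact this.congr_deriv (by ring)

lemma hasDerivAt_auxG (C : ℝ) {g : ℝ} (hg : 0 < g) :
    HasDerivAt (auxG C) (auxG1 C g) g := by
  have h := ((hasDerivAt_M C hg).mul (hasDerivAt_u g)).div_const (Real.log 2)
  exact h

lemma hasDerivAt_auxG1 (C : ℝ) {g : ℝ} (hg : 0 < g) :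
    HasDerivAt (auxG1 C) (auxG2 C g) g := by
  have hu0 : (1 : ℝ) - Real.exp (-g) ≠ 0 := ne_of_gt (u_pos hg)
  have hg1 : g + 1 ≠ 0 := by positivity
  have hinv : HasDerivAt (fun x : ℝ => 1 / (x + 1)) (-(1 / (g + 1) ^ 2)) g := by
    have h := ((hasDerivAt_id g).add_const 1).inv hg1
    have : -(1:ℝ) / (g + 1) ^ 2 = -(1 / (g + 1) ^ 2) := by ring
    simpa [one_div, this, Pi.inv_def] using h
  have hEu : HasDerivAt (fun x : ℝ => Real.exp (-x) / (1 - Real.exp (-x)))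
      ((-Real.exp (-g) * (1 - Real.exp (-g)) - Real.exp (-g) * Real.exp (-g))
        / (1 - Real.exp (-g)) ^ 2) g :=
    (hasDerivAt_E g).div (hasDerivAt_u g) hu0
  have hM' : HasDerivAt
      (fun x : ℝ => 1 / (x + 1) - 1 - Real.exp (-x) / (1 - Real.exp (-x)))
      (-(1 / (g + 1) ^ 2) + Real.exp (-g) / (1 - Real.exp (-g)) ^ 2) g := by
    have := (hinv.sub_const 1).sub hEu
    exact this.congr_deriv (by field_simp; ring)
  have h := ((hM'.mul (hasDerivAt_u g)).add ((hasDerivAt_M C hg).mul (hasDerivAt_E g))).div_const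
    (Real.log 2)
  refine h.congr_deriv ?_
  unfold auxG2
  field_simp
  ring

lemma auxG2_neg (C : ℝ) {g : ℝ} (hg : 0 < g)
    (hM : 0 ≤ Real.log C + Real.log (g + 1) - g - Real.log (1 - Real.exp (-g))) :
    auxG2 C g < 0 := by
  have hu : 0 < 1 - Real.exp (-g) := u_pos hg
  have hE : 0 < Real.exp (-g) := Real.exp_pos _
  have hP : 0 < g + 1 := by linarith
  apply div_neg_of_neg_of_pos _ (Real.log_pos one_lt_two)
  set E := Real.exp (-g) with hEdef
  set M := Real.log C + Real.log (g + 1) - g - Real.log (1 - E) with hMdef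
  have key : (-(1 / (g + 1) ^ 2) + E / (1 - E) ^ 2) * (1 - E)
      + 2 * (1 / (g + 1) - 1 - E / (1 - E)) * E - M * E
      = -((E * ((g + 1) - (1 - E)) ^ 2 + (1 - E) ^ 3 + M * E * (1 - E) * (g + 1) ^ 2)
          / ((1 - E) * (g + 1) ^ 2)) := by
    field_simp
    ring
  rw [key]
  have h1 : 0 ≤ E * ((g + 1) - (1 - E)) ^ 2 := by positivity
  have h2 : 0 < (1 - E) ^ 3 := by positivity
  have h3 : 0 ≤ M * E * (1 - E) * (g + 1) ^ 2 := by
    apply mul_nonneg (mul_nonneg (mul_nonneg hM hE.le) hu.le) (sq_nonneg _)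
  have hX : 0 < E * ((g + 1) - (1 - E)) ^ 2 + (1 - E) ^ 3 + M * E * (1 - E) * (g + 1) ^ 2 := by
    linarith
  exact neg_neg_of_pos (div_pos hX (by positivity))

lemma logA_eq (C : ℝ) (hC : 0 < C) {g : ℝ} (hg : 0 < g) :
    Real.log (C * (g + 1) * Real.exp (-g) / (1 - Real.exp (-g)))
      = Real.log C + Real.log (g + 1) - g - Real.log (1 - Real.exp (-g)) := by
  have hu : 0 < 1 - Real.exp (-g) := u_pos hg
  have hE : 0 < Real.exp (-g) := Real.exp_pos _
  have hg1 : (0:ℝ) < g + 1 := by linarith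
  rw [Real.log_div (by positivity) (ne_of_gt hu), Real.log_mul (by positivity) (ne_of_gt hE),
    Real.log_mul (ne_of_gt hC) (ne_of_gt hg1), Real.log_exp]
  ring

/-- High-SNR asymptotic throughput of the PHAT-IP scheme:
`f(g) = log₂(C (g+1) e^{−g} / (1 − e^{−g})) · (1 − e^{−g})` has strictly negative second
derivative at every `g > 0` where the logarithm's argument is at least 1; in particular,
`f` is strictly concave on any interval (i.e. convex subset of `ℝ`) contained in that set. -/
theorem phat_ip_high_snr_concave (C : ℝ) (hC : 0 < C)
    (f : ℝ → ℝ)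
    (hf : f = fun g => Real.logb 2 (C * (g + 1) * Real.exp (-g) / (1 - Real.exp (-g)))
      * (1 - Real.exp (-g))) :
    (∀ g : ℝ, 0 < g → 1 ≤ C * (g + 1) * Real.exp (-g) / (1 - Real.exp (-g)) →
        deriv (deriv f) g < 0) ∧
      ∀ s : Set ℝ, Convex ℝ s →
        s ⊆ {g : ℝ | 0 < g ∧ 1 ≤ C * (g + 1) * Real.exp (-g) / (1 - Real.exp (-g))} →
        StrictConcaveOn ℝ s f := by
  have hfG : ∀ g : ℝ, 0 < g → f =ᶠ[nhds g] auxG C := by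
    intro g hg
    filter_upwards [Ioi_mem_nhds hg] with x hx
    have hx : (0:ℝ) < x := hx
    rw [hf]
    simp only [auxG, Real.logb, logA_eq C hC hx]
    ring
  have hMnn : ∀ g : ℝ, 0 < g → 1 ≤ C * (g + 1) * Real.exp (-g) / (1 - Real.exp (-g)) →
      0 ≤ Real.log C + Real.log (g + 1) - g - Real.log (1 - Real.exp (-g)) := by
    intro g hg hA
    rw [← logA_eq C hC hg]
    exact Real.log_nonneg hA
  have hd2 : ∀ g : ℝ, 0 < g → deriv (deriv f) g = auxG2 C g := by
    intro g hg
    have h1 : deriv f =ᶠ[nhds g] deriv (auxG C) := (hfG g hg).deriv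
    have h2 : deriv (auxG C) =ᶠ[nhds g] auxG1 C := by
      filter_upwards [Ioi_mem_nhds hg] with x hx
      exact (hasDerivAt_auxG C hx).deriv
    calc deriv (deriv f) g = deriv (auxG1 C) g := (h1.trans h2).deriv_eq
      _ = auxG2 C g := (hasDerivAt_auxG1 C hg).deriv
  have hneg : ∀ g : ℝ, 0 < g → 1 ≤ C * (g + 1) * Real.exp (-g) / (1 - Real.exp (-g)) →
      deriv (deriv f) g < 0 := by
    intro g hg hA
    rw [hd2 g hg]
    exact auxG2_neg C hg (hMnn g hg hA)
  refine ⟨hneg, ?_⟩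
  intro s hconv hsub
  apply strictConcaveOn_of_deriv2_neg hconv
  · intro x hxs
    obtain ⟨hx, -⟩ := hsub hxs
    have hder : HasDerivAt f (auxG1 C x) x :=
      (hasDerivAt_auxG C hx).congr_of_eventuallyEq (hfG x hx)
    exact hder.continuousAt.continuousWithinAt
  · intro x hx
    obtain ⟨hx0, hA⟩ := hsub (interior_subset hx)
    show deriv (deriv f) x < 0
    exact hneg x hx0 hA
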